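/- Let H ∈ K_r(n) and let A be a hyperedge of H with r+1 ≤ |A| ≤ n/2. Then there exist sets X_1,…,X_k ⊆ A, each of size r+1, such that A is a hyperedge of cl_r({φ_H(X_1),…,φ_H(X_k)}), where φ_H(X_i) is the smallest hyperedge of H containing X_i and of size at most n/2. -/

import Mathlib

/-- A hypergraph on vertex set `Fin n`, identified with its family of hyperedges. -/
abbrev Family (n : ℕ) := Set (Finset (Fin n))

/-- Membership in the class `K_r(n)`: rules (k0), (k1), (k2). -/
def MemK (r n : ℕ) (E : Family n) : Prop :=
  (∀ X : Finset (Fin n), X.card ≤ r → X ∈ E) ∧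
  (∀ A ∈ E, Aᶜ ∈ E) ∧
  (∀ A ∈ E, ∀ B ∈ E, r ≤ (A ∩ B).card → A ∪ B ∈ E)

/-- Membership in the class `K⊥_r(n)`: only rules (k0) and (k1). -/
def MemKbot (r n : ℕ) (E : Family n) : Prop :=
  (∀ X : Finset (Fin n), X.card ≤ r → X ∈ E) ∧
  (∀ A ∈ E, Aᶜ ∈ E)

/-- Closure of `H` in `K_r(n)`: intersection of all members of `K_r(n)` containing `H`. -/
def clr (r n : ℕ) (H : Family n) : Family n :=
  ⋂₀ {E | MemK r n E ∧ H ⊆ E}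

/-- Closure of `H` in `K⊥_r(n)`. -/
def clbot (r n : ℕ) (H : Family n) : Family n :=
  ⋂₀ {E | MemKbot r n E ∧ H ⊆ E}

/-- `A` and `B` are `r`-orthogonal. -/
def Ortho (r n : ℕ) (A B : Finset (Fin n)) : Prop :=
  clr r n {A, B} = clbot r n {A, B}

/-- A family is `r`-cross-free if all pairs of members are `r`-orthogonal. -/
def CrossFree (r n : ℕ) (H : Family n) : Prop :=
  ∀ A ∈ H, ∀ B ∈ H, Ortho r n A B

lemma inter_mem (r n : ℕ) (H : Family n) (hH : MemK r n H)
    (C D : Finset (Fin n)) (hC : C ∈ H) (hD : D ∈ H)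
    (hCc : C.card ≤ n / 2) (hDc : D.card ≤ n / 2)
    (hI : r + 1 ≤ (C ∩ D).card) : C ∩ D ∈ H := by
  have h1 : Cᶜ ∈ H := hH.2.1 C hC
  have h2 : Dᶜ ∈ H := hH.2.1 D hD
  have hcap : Cᶜ ∩ Dᶜ = (C ∪ D)ᶜ := by rw [Finset.compl_union]
  have hcardU : (C ∪ D).card + (C ∩ D).card = C.card + D.card :=
    Finset.card_union_add_card_inter C D
  have hcompl : ((C ∪ D)ᶜ).card = n - (C ∪ D).card := by
    rw [Finset.card_compl, Fintype.card_fin]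
  have hhalf : n / 2 + n / 2 ≤ n := by omega
  have hr : r ≤ (Cᶜ ∩ Dᶜ).card := by
    rw [hcap, hcompl]
    omega
  have := hH.2.2 Cᶜ h1 Dᶜ h2 hr
  have h3 : (Cᶜ ∪ Dᶜ)ᶜ ∈ H := hH.2.1 _ this
  rwa [Finset.compl_union, compl_compl, compl_compl] at h3

lemma exists_min (r n : ℕ) (H : Family n) (hH : MemK r n H)
    (A : Finset (Fin n)) (hA : A ∈ H) (hAc : A.card ≤ n / 2)
    (X : Finset (Fin n)) (hX : X ⊆ A) (hXc : X.card = r + 1) :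
    ∃ B ∈ H, X ⊆ B ∧ B.card ≤ n / 2 ∧
      ∀ C ∈ H, X ⊆ C → C.card ≤ n / 2 → B ⊆ C := by
  classical
  set P : Finset (Fin n) → Prop := fun C => C ∈ H ∧ X ⊆ C ∧ C.card ≤ n / 2 with hP
  have hPA : P A := ⟨hA, hX, hAc⟩
  set s : Finset (Finset (Fin n)) := Finset.univ.filter P with hs
  have hAs : A ∈ s := by
    simp only [hs, Finset.mem_filter, Finset.mem_univ, true_and]
    exact hPA
  obtain ⟨B, hBs, hBmin⟩ := s.exists_min_image Finset.card ⟨A, hAs⟩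
  have hPB : P B := by simpa [hs] using hBs
  refine ⟨B, hPB.1, hPB.2.1, hPB.2.2, ?_⟩
  intro C hC hXC hCc
  have hPBC : P (B ∩ C) := by
    refine ⟨inter_mem r n H hH B C hPB.1 hC hPB.2.2 hCc ?_, ?_, ?_⟩
    · have : X ⊆ B ∩ C := Finset.subset_inter hPB.2.1 hXC
      calc r + 1 = X.card := hXc.symm
        _ ≤ (B ∩ C).card := Finset.card_le_card this
    · exact Finset.subset_inter hPB.2.1 hXC
    · exact le_trans (Finset.card_le_card Finset.inter_subset_right) hCc
  have hBCs : B ∩ C ∈ s := by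
    simp only [hs, Finset.mem_filter, Finset.mem_univ, true_and]
    exact hPBC
  have hle : B.card ≤ (B ∩ C).card := hBmin _ hBCs
  have heq : B ∩ C = B :=
    Finset.eq_of_subset_of_card_le Finset.inter_subset_left hle
  exact Finset.inter_eq_left.mp heq

theorem hyperedge_from_essential (r n : ℕ) (H : Family n) (hH : MemK r n H)
    (A : Finset (Fin n)) (hA : A ∈ H) (h₁ : r + 1 ≤ A.card) (h₂ : A.card ≤ n / 2) :
    ∃ (k : ℕ) (X B : Fin k → Finset (Fin n)),
      (∀ i, X i ⊆ A ∧ (X i).card = r + 1) ∧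
      (∀ i, B i ∈ H ∧ X i ⊆ B i ∧ (B i).card ≤ n / 2 ∧
        ∀ C ∈ H, X i ⊆ C → C.card ≤ n / 2 → B i ⊆ C) ∧
      A ∈ clr r n (Set.range B) := by
  classical
  -- choose a base set S ⊆ A with |S| = r
  obtain ⟨S, hSA, hScard⟩ := A.exists_subset_card_eq (n := r) (by omega)
  set k := (A \ S).card with hk
  have hkpos : 1 ≤ k := by
    have hcard : (A \ S).card = A.card - S.card := Finset.card_sdiff_of_subset hSA
    omega
  -- enumerate A \ S
  let e : Fin k ≃o {x // x ∈ A \ S} := (A \ S).orderIsoOfFin rfl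
  -- X i = S plus one new element of A \ S
  set X : Fin k → Finset (Fin n) := fun i => insert ((e i : Fin n)) S with hX
  have heAS : ∀ i : Fin k, (e i : Fin n) ∈ A \ S := fun i => (e i).2
  have hXA : ∀ i, X i ⊆ A := by
    intro i
    apply Finset.insert_subset
    · exact (Finset.mem_sdiff.mp (heAS i)).1
    · exact hSA
  have hXcard : ∀ i, (X i).card = r + 1 := by
    intro i
    rw [hX]
    rw [Finset.card_insert_of_notMem (Finset.mem_sdiff.mp (heAS i)).2, hScard]
  have hSX : ∀ i, S ⊆ X i := fun i => Finset.subset_insert _ _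
  -- choose minimal hyperedges B i
  have hmin : ∀ i : Fin k, ∃ B ∈ H, X i ⊆ B ∧ B.card ≤ n / 2 ∧
      ∀ C ∈ H, X i ⊆ C → C.card ≤ n / 2 → B ⊆ C :=
    fun i => exists_min r n H hH A hA h₂ (X i) (hXA i) (hXcard i)
  choose B hBH hXB hBcard hBmin using hmin
  have hBA : ∀ i, B i ⊆ A := fun i => hBmin i A hA (hXA i) h₂
  have hSB : ∀ i, S ⊆ B i := fun i => (hSX i).trans (hXB i)
  refine ⟨k, X, B, fun i => ⟨hXA i, hXcard i⟩,
    fun i => ⟨hBH i, hXB i, hBcard i, hBmin i⟩, ?_⟩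
  -- A is in the closure of the B i's
  intro E hE
  obtain ⟨hEK, hBE⟩ := hE
  have hBiE : ∀ i : Fin k, B i ∈ E := fun i => hBE ⟨i, rfl⟩
  -- build up the union of the B i's step by step
  have key : ∀ j : ℕ, j < k → ∃ U ∈ E, S ⊆ U ∧ U ⊆ A ∧
      ∀ i : Fin k, (i : ℕ) ≤ j → B i ⊆ U := by
    intro j
    induction j with
    | zero =>
      intro hj
      refine ⟨B ⟨0, hj⟩, hBiE _, hSB _, hBA _, ?_⟩
      intro i hi
      have : i = ⟨0, hj⟩ := Fin.ext (by simp only [Fin.val_mk]; omega)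
      rw [this]
    | succ j ih =>
      intro hj
      obtain ⟨U, hUE, hSU, hUA, hUB⟩ := ih (by omega)
      refine ⟨U ∪ B ⟨j + 1, hj⟩, ?_, hSU.trans Finset.subset_union_left,
        Finset.union_subset hUA (hBA _), ?_⟩
      · apply hEK.2.2 U hUE _ (hBiE _)
        have hSint : S ⊆ U ∩ B ⟨j + 1, hj⟩ := Finset.subset_inter hSU (hSB _)
        calc r = S.card := hScard.symm
          _ ≤ _ := Finset.card_le_card hSint
      · intro i hi
        rcases Nat.lt_or_ge (i : ℕ) (j + 1) with h | h
        · exact (hUB i (by omega)).trans Finset.subset_union_left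
        · have : i = ⟨j + 1, hj⟩ := Fin.ext (by simp only [Fin.val_mk]; omega)
          rw [this]
          exact Finset.subset_union_right
  obtain ⟨U, hUE, hSU, hUA, hUB⟩ := key (k - 1) (by omega)
  have hAU : A ⊆ U := by
    intro a ha
    by_cases haS : a ∈ S
    · exact hSU haS
    · have haAS : a ∈ A \ S := Finset.mem_sdiff.mpr ⟨ha, haS⟩
      set i := e.symm ⟨a, haAS⟩ with hi
      have hea : (e i : Fin n) = a := by rw [hi, OrderIso.apply_symm_apply]
      have haX : a ∈ X i := by rw [hX]; rw [← hea]; exact Finset.mem_insert_self _ _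
      have : a ∈ B i := hXB i haX
      exact hUB i (by omega) this
  have : A = U := Finset.Subset.antisymm hAU hUA
  rw [this]
  exact hUE
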